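/- A right Kan extension with values in a category having all copowers (i.e., coproducts of copies of an object indexed by a set) is pointwise: it is preserved by every hom-functor Hom(C, -). -/

import Mathlib

open CategoryTheory CategoryTheory.Limits

universe v u₁ u₂ u₃

section Aux

variable {A : Type*} [Category A] {C : Type*} [Category C]
  {B : Type*} [Category B] {H : Type*} [Category H]

/-- A right adjoint preserves right Kan extensions. -/
lemma aux_isRightKanExtension_comp_of_adjunction
    {L : H ⥤ B} {R : B ⥤ H} (adj : L ⊣ R)
    (U : A ⥤ C) (S : A ⥤ B) (T : C ⥤ B) (e : U ⋙ T ⟶ S) [T.IsRightKanExtension e] :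
    (T ⋙ R).IsRightKanExtension
      ((Functor.associator U T R).inv ≫ CategoryTheory.Functor.whiskerRight e R) := by
  constructor
  dsimp only [Functor.RightExtension.mk, CostructuredArrow.mk]
  refine ⟨IsTerminal.ofUniqueHom (fun X => ?_) (fun X m => ?_)⟩
  · -- existence of lift
    let β : U ⋙ X.left ⟶ S ⋙ R := X.hom
    let β' : U ⋙ (X.left ⋙ L) ⟶ S :=
      { app := fun a => (adj.homEquiv _ _).symm (β.app a)
        naturality := fun a a' f => by
          dsimp
          rw [← Adjunction.homEquiv_naturality_left_symm,
            ← Adjunction.homEquiv_naturality_right_symm]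
          exact congrArg _ (β.naturality f) }
    let φ : X.left ⋙ L ⟶ T := T.liftOfIsRightKanExtension e (X.left ⋙ L) β'
    refine CostructuredArrow.homMk
      { app := fun x => adj.homEquiv _ _ (φ.app x)
        naturality := fun x x' f => by
          dsimp only [CostructuredArrow.left, Functor.comp_map]
          rw [← Adjunction.homEquiv_naturality_left,
            ← Adjunction.homEquiv_naturality_right]
          exact congrArg _ (φ.naturality f) } ?_
    ext a
    dsimp [CostructuredArrow.hom]
    change adj.homEquiv _ _ (φ.app (U.obj a)) ≫ 𝟙 (R.obj (T.obj (U.obj a))) ≫ R.map (e.app a) = X.hom.app a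
    rw [Category.id_comp, ← Adjunction.homEquiv_naturality_right,
      T.liftOfIsRightKanExtension_fac_app e (X.left ⋙ L) β' a]
    simp [β', β]
  · -- uniqueness
    apply CostructuredArrow.hom_ext
    have hm : CategoryTheory.Functor.whiskerLeft U m.left ≫
        ((Functor.associator U T R).inv ≫ CategoryTheory.Functor.whiskerRight e R) = X.hom := by
      simpa using m.w
    let ψ : X.left ⋙ L ⟶ T :=
      { app := fun x => (adj.homEquiv _ _).symm (m.left.app x)
        naturality := fun x x' f => by
          dsimp
          rw [← Adjunction.homEquiv_naturality_left_symm,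
            ← Adjunction.homEquiv_naturality_right_symm]
          exact congrArg _ (m.left.naturality f) }
    let β'' : U ⋙ (X.left ⋙ L) ⟶ S :=
        { app := fun a => (adj.homEquiv _ _).symm (X.hom.app a)
          naturality := fun a a' f => by
            dsimp
            rw [← Adjunction.homEquiv_naturality_left_symm,
              ← Adjunction.homEquiv_naturality_right_symm]
            exact congrArg _ (X.hom.naturality f) }
    have hψ : CategoryTheory.Functor.whiskerLeft U ψ ≫ e = β'' := by
      ext a
      dsimp [ψ]
      rw [← Adjunction.homEquiv_naturality_right_symm]
      show _ = β''.app a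
      dsimp [β'']
      congr 1
      have := congrArg (fun (t : U ⋙ X.left ⟶ S ⋙ R) => t.app a) hm
      dsimp at this
      rwa [Category.id_comp] at this
    have huniq : ψ = T.liftOfIsRightKanExtension e (X.left ⋙ L) β'' := by
      apply T.hom_ext_of_isRightKanExtension e
      rw [hψ, T.liftOfIsRightKanExtension_fac]
    ext x
    have : ψ.app x = (T.liftOfIsRightKanExtension e (X.left ⋙ L) β'').app x := by rw [huniq]
    dsimp [ψ] at this
    calc m.left.app x = adj.homEquiv _ _ ((adj.homEquiv _ _).symm (m.left.app x)) := by rw [Equiv.apply_symm_apply]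
    _ = _ := by rw [this]; rfl

end Aux

section Copower

variable {B : Type u₃} [Category.{v} B]
  (copowers : ∀ (I : Type v) (b : B), HasCoproduct (fun _ : I => b)) (c : B)

/-- The copower functor `I ↦ ∐_I c`. -/
noncomputable def auxCopower : Type v ⥤ B where
  obj I := haveI := copowers I c; ∐ (fun _ : I => c)
  map {I J} f := haveI := copowers I c; haveI := copowers J c
    Sigma.desc (fun i => Sigma.ι (fun _ : J => c) (f i))
  map_id I := by
    haveI := copowers I c
    apply Sigma.hom_ext
    intro i
    simp
  map_comp {I J K} f g := by
    haveI := copowers I c; haveI := copowers J c; haveI := copowers K c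
    apply Sigma.hom_ext
    intro i
    simp

/-- The copower functor is left adjoint to `coyoneda.obj (op c)`. -/
noncomputable def auxCopowerAdj : auxCopower copowers c ⊣ coyoneda.obj (Opposite.op c) :=
  Adjunction.mkOfHomEquiv
    { homEquiv := fun I b =>
        haveI := copowers I c
        { toFun := fun g => TypeCat.ofHom (fun i => Sigma.ι (fun _ : I => c) i ≫ g)
          invFun := fun h => Sigma.desc (fun i => h i)
          left_inv := fun g => by
            apply Sigma.hom_ext; intro i; simp
          right_inv := fun h => by
            ext i; simp }
      homEquiv_naturality_left_symm := fun {I J b} f h => by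
        haveI := copowers I c; haveI := copowers J c
        dsimp [auxCopower]
        apply Sigma.hom_ext; intro i; change Sigma.ι (fun _ : I => c) i ≫ Sigma.desc (fun j => h (f j)) =
          Sigma.ι (fun _ : I => c) i ≫ Sigma.desc (fun j => Sigma.ι (fun _ : J => c) (f j)) ≫
            Sigma.desc (fun j => h j)
        rw [Sigma.ι_desc, Sigma.ι_desc_assoc, Sigma.ι_desc]
      homEquiv_naturality_right := fun {I b b'} g k => by
        haveI := copowers I c
        ext i
        exact (Category.assoc _ _ _).symm }

end Copower

/-- A right Kan extension with values in a category `B` having all copowers (coproducts of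
copies of an object indexed by a set) is pointwise: it is preserved by every hom-functor
`Hom(c, -) : B ⥤ Type`. -/
theorem stmt2 {A : Type u₁} [Category.{v} A] {C : Type u₂} [Category.{v} C]
    {B : Type u₃} [Category.{v} B]
    (copowers : ∀ (I : Type v) (b : B), HasCoproduct (fun _ : I => b))
    (U : A ⥤ C) (S : A ⥤ B) (T : C ⥤ B) (e : U ⋙ T ⟶ S) [T.IsRightKanExtension e] :
    ∀ c : B, (T ⋙ coyoneda.obj (Opposite.op c)).IsRightKanExtension
      ((Functor.associator U T (coyoneda.obj (Opposite.op c))).inv ≫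
        CategoryTheory.Functor.whiskerRight e (coyoneda.obj (Opposite.op c))) := by
  intro c
  exact aux_isRightKanExtension_comp_of_adjunction (auxCopowerAdj copowers c) U S T e
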